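/- arXiv:2210.08693 — 2 statements merged into one kernel-verified Lean document; each statement's English description precedes it below -/
import Mathlib

section
/- Let n = 2^t·m with m an odd positive integer and t ≥ 1, let q be a positive integer, and set q' = q/2^{ϑ₂(q)} (an odd integer). If 2^{t−1} ∣ q then c_n(q) = (−1)^{q/2^{t−1}}·2^{t−1}·c_m(q'), and if 2^{t−1} ∤ q then c_n(q) = 0. -/
open scoped BigOperators
open Finset

/-- Ramanujan's sum `c_m(q) = Σ_{1 ≤ a ≤ m, gcd(a,m)=1} e^{2πiaq/m}`. -/
noncomputable def rc (m q : ℕ) : ℂ :=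
  ∑ a ∈ (Finset.Icc 1 m).filter (fun a => Nat.gcd a m = 1),
    Complex.exp (((2 * Real.pi * a * q / m : ℝ) : ℂ) * Complex.I)

/-- Ramanujan's sine sum `s_m(q) = −Σ_{1 ≤ a ≤ m−1, gcd(a,m)=1, a ≡ 1 (4)} 2 sin(2πaq/m)`. -/
noncomputable def rs (m q : ℕ) : ℂ :=
  -∑ a ∈ (Finset.Icc 1 (m - 1)).filter (fun a => Nat.gcd a m = 1 ∧ a % 4 = 1),
    2 * Complex.sin ((2 * Real.pi * a * q / m : ℝ) : ℂ)

/-- `G_n(d) = {k : 1 ≤ k ≤ n−1, gcd(k,n) = d}`. -/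
def Gn (n d : ℕ) : Finset ℕ := (Finset.Icc 1 (n - 1)).filter (fun k => Nat.gcd k n = d)

/-- `G_n^r(d) = {k ∈ G_n(d) : k ≡ r (mod 4)}`. -/
def Gnr (n d r : ℕ) : Finset ℕ := (Gn n d).filter (fun k => k % 4 = r)

/-- Connection set of the integral mixed circulant graph `IMCG_n(B,D,σ)`. -/
def connSet (n : ℕ) (B D : Finset ℕ) (σ : ℕ → ℤ) : Finset ℕ :=
  (B.biUnion (fun d => Gn n d)) ∪ (D.biUnion (fun d => Gnr n d (if σ d = 1 then 1 else 3)))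

/-- The subset of `ℤ_n` obtained from a finite set of natural numbers. -/
def castSet (n : ℕ) (C : Finset ℕ) : Set (ZMod n) := (fun k : ℕ => (k : ZMod n)) '' ↑C

open Classical in
/-- Hermitian adjacency matrix of the mixed graph on `ℤ_n` with connection set `C`. -/
noncomputable def Hgraph (n : ℕ) (C : Set (ZMod n)) : Matrix (ZMod n) (ZMod n) ℂ :=
  Matrix.of fun a b =>
    if b - a ∈ C ∧ a - b ∈ C then 1
    else if b - a ∈ C then Complex.I
    else if a - b ∈ C then -Complex.I
    else 0


open Classical in
/-- Hermitian adjacency matrix of the mixed circulant graph `G(ℤ_n, C)` with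
arc set given explicitly by `Cbar ⊆ C`. -/
noncomputable def Hmix (n : ℕ) (C Cbar : Set (ZMod n)) : Matrix (ZMod n) (ZMod n) ℂ :=
  Matrix.of fun a b =>
    if b - a ∈ C \ Cbar then 1
    else if b - a ∈ Cbar then Complex.I
    else if a - b ∈ Cbar then -Complex.I
    else 0

open Classical in
/-- Adjacency (0-1) matrix of the circulant graph on `ℤ_n` with connection set `C`. -/
noncomputable def Hadj (n : ℕ) (C : Set (ZMod n)) : Matrix (ZMod n) (ZMod n) ℂ :=
  Matrix.of fun a b => if b - a ∈ C then 1 else 0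

/-- Perfect state transfer from `u` to `v` for the Hamiltonian `H`. -/
noncomputable def PSTmat (n : ℕ) [NeZero n] (H : Matrix (ZMod n) (ZMod n) ℂ)
    (u v : ZMod n) : Prop :=
  ∃ (t : ℝ) (γ : ℂ), ‖γ‖ = 1 ∧
    (NormedSpace.exp ((Complex.I * (t : ℂ)) • H)).mulVec (Pi.single u 1)
      = γ • (Pi.single v 1 : ZMod n → ℂ)

/-- `ω = e^{2πi/n}`. -/
noncomputable def omegaN (n : ℕ) : ℂ := Complex.exp (((2 * Real.pi / n : ℝ) : ℂ) * Complex.I)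

/-- The eigenvector `v_j = (1, ω^j, ω^{2j}, …, ω^{(n−1)j})`. -/
noncomputable def eigVec (n : ℕ) (j : ℕ) : ZMod n → ℂ := fun a => omegaN n ^ (a.val * j)

/-- Perfect state transfer from `u` to `v` on the mixed graph with connection set `C`. -/
noncomputable def PST (n : ℕ) [NeZero n] (C : Set (ZMod n)) (u v : ZMod n) : Prop :=
  PSTmat n (Hgraph n C) u v

/-- The data `(B, D, σ)` defines an integral mixed circulant graph `IMCG_n(B,D,σ)`. -/
def IsIMCG (n : ℕ) (B D : Finset ℕ) (σ : ℕ → ℤ) : Prop :=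
  (∀ d ∈ B, d ∣ n ∧ 1 ≤ d ∧ d < n) ∧
  (∀ d ∈ D, d ∣ n / 4 ∧ 1 ≤ d ∧ d ≤ n / 4) ∧
  (¬ (4 ∣ n) → D = ∅) ∧
  Disjoint B D ∧
  (∀ d ∈ D, σ d = 1 ∨ σ d = -1)

/-- The eigenvalues `γ_j = Σ_{d∈B} c_{n/d}(j) + Σ_{d∈D} σ(d)·s_{n/d}(j)`. -/
noncomputable def gammaEig (n : ℕ) (B D : Finset ℕ) (σ : ℕ → ℤ) (j : ℕ) : ℂ :=
  (∑ d ∈ B, rc (n / d) j) + ∑ d ∈ D, (σ d : ℂ) * rs (n / d) j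

/-- `B_i = {d ∈ B : ϑ₂(n/d) = i}` (also used for `D_i`). -/
def Bpart (n : ℕ) (B : Finset ℕ) (i : ℕ) : Finset ℕ :=
  B.filter (fun d => padicValNat 2 (n / d) = i)

/-- `B*_i = B_i \ {n/2^i}`. -/
def BpartStar (n : ℕ) (B : Finset ℕ) (i : ℕ) : Finset ℕ := (Bpart n B i).erase (n / 2 ^ i)

/-- `cS = {c·d : d ∈ S}`. -/
def scaleSet (c : ℕ) (S : Finset ℕ) : Finset ℕ := S.image (fun d => c * d)

/-- `Λ_1(j)`. -/
noncomputable def Lam1 (n : ℕ) (D : Finset ℕ) (σ : ℕ → ℤ) (j : ℕ) : ℂ :=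
  ∑ d ∈ Bpart n D 2, (σ d : ℂ) * (-1 : ℂ) ^ ((n / (4 * d) - 1) / 2)
    * (-1 : ℂ) ^ ((j + 1) / 2) * rc (n / (4 * d)) j

/-- `Λ_2(j)`. -/
noncomputable def Lam2 (n : ℕ) (D : Finset ℕ) (σ : ℕ → ℤ) (j : ℕ) : ℂ :=
  ∑ d ∈ Bpart n D 3, (σ d : ℂ) * (-1 : ℂ) ^ ((n / (8 * d) - 1) / 2)
    * (-1 : ℂ) ^ ((j / 2 + 1) / 2) * rc (n / (8 * d)) (j / 2)

/-- `Λ_3(j)`. -/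
noncomputable def Lam3 (n : ℕ) (B D : Finset ℕ) (σ : ℕ → ℤ) (j : ℕ) : ℂ :=
  (∑ i ∈ Finset.Icc 4 (padicValNat 2 n), ∑ d ∈ Bpart n B i,
      (if 2 ^ (i - 1) ∣ j then (-1 : ℂ) ^ (j / 2 ^ (i - 1)) else 0)
        * 2 ^ (i - 4) * rc (n / (2 ^ i * d)) (j / 2 ^ (padicValNat 2 j)))
  + ∑ i ∈ Finset.Icc 4 (padicValNat 2 n), ∑ d ∈ Bpart n D i,
      (if 2 ^ (i - 2) ∣ j ∧ Odd (j / 2 ^ (i - 2)) then 1 else 0)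
        * (σ d : ℂ) * (-1 : ℂ) ^ ((n / (2 ^ i * d) - 1) / 2)
        * (-1 : ℂ) ^ ((j / 2 ^ (i - 2) + 1) / 2) * 2 ^ (i - 4)
        * rc (n / (2 ^ i * d)) (j / 2 ^ (i - 2))

/-- `Δ(j)`. -/
noncomputable def Delta (n : ℕ) (B D : Finset ℕ) (σ : ℕ → ℤ) (j : ℕ) : ℂ :=
  (∑ d ∈ BpartStar n B 2, rc (n / (4 * d)) (j / 2 ^ (padicValNat 2 j)))
  + (∑ d ∈ Bpart n B 3, (-1 : ℂ) ^ (j / 4) * rc (n / (8 * d)) (j / 2 ^ (padicValNat 2 j)))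
  + 2 * Lam3 n B D σ j

noncomputable def fterm (n q a : ℕ) : ℂ :=
  Complex.exp (((2 * Real.pi * a * q / n : ℝ) : ℂ) * Complex.I)

lemma rc_eq_fterm (n q : ℕ) :
    rc n q = ∑ a ∈ (Finset.Icc 1 n).filter (fun a => Nat.gcd a n = 1), fterm n q a := rfl

lemma fterm_char (n q a : ℕ) [NeZero n] :
    fterm n q a = ZMod.stdAddChar ((a * q : ℕ) : ZMod n) := by
  have := ZMod.stdAddChar_coe (N := n) (a * q : ℤ)
  rw [fterm]
  push_cast at this ⊢
  rw [this]
  ring_nf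

lemma rc_eq_units (n q : ℕ) [NeZero n] :
    rc n q = ∑ u : (ZMod n)ˣ, ZMod.stdAddChar ((u : ZMod n) * (q : ZMod n)) := by
  have hn : 0 < n := Nat.pos_of_ne_zero (NeZero.ne n)
  rw [rc_eq_fterm]
  refine Finset.sum_bij (fun a ha => ZMod.unitOfCoprime a (by simpa [Nat.Coprime] using (Finset.mem_filter.mp ha).2)) (fun a ha => Finset.mem_univ _) ?_ ?_ ?_
  · -- injective
    intro a₁ ha₁ a₂ ha₂ h
    rcases eq_or_lt_of_le (show 1 ≤ n from hn) with h1 | h1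
    · have := (Finset.mem_Icc.mp (Finset.mem_filter.mp ha₁).1)
      have := (Finset.mem_Icc.mp (Finset.mem_filter.mp ha₂).1)
      omega
    · have hc : (a₁ : ZMod n) = (a₂ : ZMod n) := by
        have := congrArg (Units.val) h
        simpa [ZMod.coe_unitOfCoprime] using this
      have hlt : ∀ a : ℕ, a ∈ (Finset.Icc 1 n).filter (fun a => Nat.gcd a n = 1) → a < n := by
        intro a ha
        rcases Finset.mem_filter.mp ha with ⟨h1', h2'⟩
        rcases Finset.mem_Icc.mp h1' with ⟨hl, hr⟩
        rcases lt_or_eq_of_le hr with h | h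
        · exact h
        · subst h; simp [Nat.gcd_self] at h2'; omega
      have e1 := ZMod.val_cast_of_lt (hlt _ ha₁)
      have e2 := ZMod.val_cast_of_lt (hlt _ ha₂)
      rw [← e1, ← e2, hc]
  · -- surjective
    intro u _
    rcases eq_or_lt_of_le (show 1 ≤ n from hn) with h1 | h1
    · refine ⟨1, ?_, ?_⟩
      · simp [Finset.mem_filter, Finset.mem_Icc]; omega
      · apply Units.ext
        have : Subsingleton (ZMod n) := by rw [← h1]; infer_instance
        exact Subsingleton.elim _ _
    · haveI : Nontrivial (ZMod n) := by
        have : 1 < n := h1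
        have : Fact (1 < n) := ⟨this⟩
        infer_instance
      refine ⟨(u : ZMod n).val, ?_, ?_⟩
      · refine Finset.mem_filter.mpr ⟨Finset.mem_Icc.mpr ⟨?_, ?_⟩, ?_⟩
        · have : (u : ZMod n) ≠ 0 := Units.ne_zero u
          have := ZMod.val_pos.mpr this
          omega
        · exact le_of_lt (ZMod.val_lt _)
        · exact ZMod.val_coe_unit_coprime u
      · apply Units.ext
        simp [ZMod.coe_unitOfCoprime, ZMod.natCast_val, ZMod.cast_id]
  · intro a ha
    rw [fterm_char]
    congr 1
    push_cast
    rw [ZMod.coe_unitOfCoprime]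

lemma rc_two_mul (m q : ℕ) (hm : Odd m) (hm0 : 0 < m) : rc m (2 * q) = rc m q := by
  haveI : NeZero m := ⟨hm0.ne'⟩
  rw [rc_eq_units, rc_eq_units]
  have h2 : Nat.Coprime 2 m := by
    exact Nat.coprime_two_left.mpr hm
  set u₂ : (ZMod m)ˣ := ZMod.unitOfCoprime 2 h2 with hu₂
  calc ∑ u : (ZMod m)ˣ, ZMod.stdAddChar ((u : ZMod m) * ((2 * q : ℕ) : ZMod m))
      = ∑ u : (ZMod m)ˣ, ZMod.stdAddChar (((u₂ * u : (ZMod m)ˣ) : ZMod m) * ((q : ℕ) : ZMod m)) := by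
        apply Finset.sum_congr rfl
        intro u _
        congr 1
        rw [Units.val_mul, hu₂, ZMod.coe_unitOfCoprime]
        push_cast
        ring
    _ = ∑ u : (ZMod m)ˣ, ZMod.stdAddChar ((u : ZMod m) * (q : ZMod m)) := by
        exact Equiv.sum_comp (Equiv.mulLeft u₂) (fun v => ZMod.stdAddChar ((v : ZMod m) * (q : ZMod m)))

lemma sum_split (n : ℕ) (P : ℕ → Prop) [DecidablePred P]
    (hP : ∀ b, P (b + n) ↔ P b) (F : ℕ → ℂ) :
    ∑ a ∈ (Finset.Icc 1 (2 * n)).filter P, F a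
      = ∑ b ∈ (Finset.Icc 1 n).filter P, (F b + F (b + n)) := by
  have hset : (Finset.Icc 1 (2 * n)).filter P
      = ((Finset.Icc 1 n).filter P) ∪ (((Finset.Icc 1 n).filter P).image (· + n)) := by
    ext a
    simp only [Finset.mem_filter, Finset.mem_Icc, Finset.mem_union, Finset.mem_image]
    constructor
    · rintro ⟨⟨h1, h2⟩, hp⟩
      by_cases h : a ≤ n
      · exact Or.inl ⟨⟨h1, h⟩, hp⟩
      · refine Or.inr ⟨a - n, ⟨⟨by omega, by omega⟩, ?_⟩, by omega⟩
        have he : a - n + n = a := by omega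
        rw [← he, hP] at hp; exact hp
    · rintro (⟨⟨h1, h2⟩, hp⟩ | ⟨b, ⟨⟨h1, h2⟩, hp⟩, rfl⟩)
      · exact ⟨⟨h1, by omega⟩, hp⟩
      · exact ⟨⟨by omega, by omega⟩, (hP b).mpr hp⟩
  rw [hset, Finset.sum_union, Finset.sum_image, ← Finset.sum_add_distrib]
  · intro x _ y _ h
    simpa using h
  · rw [Finset.disjoint_right]
    intro a ha hc
    simp only [Finset.mem_image, Finset.mem_filter, Finset.mem_Icc] at ha hc
    omega

lemma fterm_add_half (n q b : ℕ) (hn : n ≠ 0) :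
    fterm (2 * n) q (b + n) = (-1 : ℂ) ^ q * fterm (2 * n) q b := by
  have hn' : (n : ℝ) ≠ 0 := Nat.cast_ne_zero.mpr hn
  have hr : (2 * Real.pi * ((b + n : ℕ) : ℝ) * q / ((2 * n : ℕ) : ℝ) : ℝ)
      = (2 * Real.pi * (b : ℝ) * q / ((2 * n : ℕ) : ℝ) : ℝ) + q * Real.pi := by
    push_cast
    field_simp
  rw [fterm, fterm, hr]
  push_cast
  rw [add_mul, Complex.exp_add]
  have h2 : ((q : ℂ) * (Real.pi : ℂ)) * Complex.I = (q : ℂ) * ((Real.pi : ℂ) * Complex.I) := by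
    ring
  rw [h2, Complex.exp_nat_mul, Complex.exp_pi_mul_I]
  ring

lemma fterm_double_idx (n q b : ℕ) (hn : n ≠ 0) :
    fterm (2 * n) q (2 * b) = fterm n q b := by
  have hn' : (n : ℝ) ≠ 0 := Nat.cast_ne_zero.mpr hn
  have hr : (2 * Real.pi * ((2 * b : ℕ) : ℝ) * q / ((2 * n : ℕ) : ℝ) : ℝ)
      = (2 * Real.pi * (b : ℝ) * q / (n : ℝ) : ℝ) := by
    push_cast
    field_simp
  rw [fterm, fterm, hr]

lemma fterm_double_q (n q b : ℕ) (hn : n ≠ 0) :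
    fterm (2 * n) (2 * q) b = fterm n q b := by
  have hn' : (n : ℝ) ≠ 0 := Nat.cast_ne_zero.mpr hn
  have hr : (2 * Real.pi * (b : ℝ) * ((2 * q : ℕ) : ℝ) / ((2 * n : ℕ) : ℝ) : ℝ)
      = (2 * Real.pi * (b : ℝ) * q / (n : ℝ) : ℝ) := by
    push_cast
    field_simp
  rw [fterm, fterm, hr]

lemma cop_add_n (n b : ℕ) : Nat.Coprime (b + n) n ↔ Nat.Coprime b n := by
  rw [Nat.coprime_comm, Nat.coprime_add_self_right, Nat.coprime_comm]

lemma cop_add_inv (n : ℕ) (h2 : 2 ∣ n) (b : ℕ) :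
    Nat.gcd (b + n) (2 * n) = 1 ↔ Nat.gcd b (2 * n) = 1 := by
  show Nat.Coprime (b + n) (2 * n) ↔ Nat.Coprime b (2 * n)
  rw [Nat.coprime_mul_iff_right, Nat.coprime_mul_iff_right, cop_add_n]
  have hparity : Nat.Coprime (b + n) 2 ↔ Nat.Coprime b 2 := by
    rw [Nat.coprime_two_right, Nat.coprime_two_right, Nat.odd_iff, Nat.odd_iff]
    omega
  rw [hparity]

lemma cop_two_mul (n : ℕ) (h2 : 2 ∣ n) (b : ℕ) :
    Nat.gcd b (2 * n) = 1 ↔ Nat.gcd b n = 1 := by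
  show Nat.Coprime b (2 * n) ↔ Nat.Coprime b n
  rw [Nat.coprime_mul_iff_right]
  constructor
  · exact fun h => h.2
  · intro h
    exact ⟨h.coprime_dvd_right h2, h⟩

lemma rc_double_zero (n q : ℕ) (hn : 0 < n) (h2 : 2 ∣ n) (hq : Odd q) :
    rc (2 * n) q = 0 := by
  rw [rc_eq_fterm, sum_split n _ (cop_add_inv n h2)]
  refine Finset.sum_eq_zero fun b _ => ?_
  rw [fterm_add_half n q b hn.ne', Odd.neg_one_pow hq]
  ring

lemma rc_double_even (n q : ℕ) (hn : 0 < n) (h2 : 2 ∣ n) :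
    rc (2 * n) (2 * q) = 2 * rc n q := by
  rw [rc_eq_fterm, sum_split n _ (cop_add_inv n h2)]
  have : ∀ b ∈ (Finset.Icc 1 n).filter (fun a => Nat.gcd a (2 * n) = 1),
      fterm (2 * n) (2 * q) b + fterm (2 * n) (2 * q) (b + n) = 2 * fterm n q b := by
    intro b _
    rw [fterm_add_half n _ b hn.ne', fterm_double_q n q b hn.ne', Even.neg_one_pow ⟨q, by ring⟩]
    ring
  rw [Finset.sum_congr rfl this, ← Finset.mul_sum, rc_eq_fterm]
  congr 1
  apply Finset.sum_congr _ (fun _ _ => rfl)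
  apply Finset.filter_congr
  intro b _
  simp only [cop_two_mul n h2 b, eq_iff_iff]

lemma rc_base_core (m q : ℕ) (hm : Odd m) (hm0 : 0 < m) :
    rc (2 * m) q + rc m q
      = (1 + (-1 : ℂ) ^ q) * ∑ b ∈ (Finset.Icc 1 m).filter (fun a => Nat.gcd a m = 1),
          fterm (2 * m) q b := by
  classical
  have hiff : ∀ a : ℕ, Nat.gcd a (2 * m) = 1 ↔ (Nat.gcd a m = 1 ∧ a % 2 = 1) := by
    intro a
    show Nat.Coprime a (2 * m) ↔ _
    rw [Nat.coprime_mul_iff_right, Nat.coprime_two_right, Nat.odd_iff]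
    tauto
  set U := (Finset.Icc 1 (2 * m)).filter (fun a => Nat.gcd a m = 1) with hU
  have hS2 : (Finset.Icc 1 (2 * m)).filter (fun a => Nat.gcd a (2 * m) = 1)
      = U.filter (fun a => a % 2 = 1) := by
    rw [hU, Finset.filter_filter]
    apply Finset.filter_congr
    intro a _
    simp only [hiff a, eq_iff_iff]
  have hEv : U.filter (fun a => ¬ a % 2 = 1)
      = ((Finset.Icc 1 m).filter (fun b => Nat.gcd b m = 1)).image (fun b => 2 * b) := by
    ext a
    simp only [Finset.mem_filter, Finset.mem_Icc, Finset.mem_image, hU]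
    constructor
    · rintro ⟨⟨⟨h1, h2'⟩, hg⟩, hp⟩
      refine ⟨a / 2, ⟨⟨by omega, by omega⟩, ?_⟩, by omega⟩
      have ha : a = 2 * (a / 2) := by omega
      have : Nat.Coprime (2 * (a / 2)) m := by rw [← ha]; exact hg
      exact (Nat.coprime_mul_iff_left.mp this).2
    · rintro ⟨b, ⟨⟨h1, h2'⟩, hg⟩, rfl⟩
      have hcop2 : Nat.Coprime 2 m := Nat.coprime_two_left.mpr hm
      refine ⟨⟨⟨by omega, by omega⟩, Nat.Coprime.mul hcop2 hg⟩, by omega⟩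
  have hsplitU : ∑ a ∈ U, fterm (2 * m) q a
      = ∑ b ∈ (Finset.Icc 1 m).filter (fun a => Nat.gcd a m = 1),
          (fterm (2 * m) q b + fterm (2 * m) q (b + m)) := by
    rw [hU]
    exact sum_split m _ (fun b => cop_add_n m b) _
  have hsum : ∑ a ∈ U.filter (fun a => a % 2 = 1), fterm (2 * m) q a
      + ∑ a ∈ U.filter (fun a => ¬ a % 2 = 1), fterm (2 * m) q a
      = ∑ a ∈ U, fterm (2 * m) q a :=
    Finset.sum_filter_add_sum_filter_not U _ _
  have hEvSum : ∑ a ∈ U.filter (fun a => ¬ a % 2 = 1), fterm (2 * m) q a = rc m q := by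
    rw [hEv, Finset.sum_image (by intro x _ y _ h; simp only at h; omega), rc_eq_fterm]
    exact Finset.sum_congr rfl fun b _ => fterm_double_idx m q b hm0.ne'
  have hpair : ∀ b, fterm (2 * m) q b + fterm (2 * m) q (b + m)
      = (1 + (-1 : ℂ) ^ q) * fterm (2 * m) q b := by
    intro b
    rw [fterm_add_half m q b hm0.ne']
    ring
  calc rc (2 * m) q + rc m q
      = ∑ a ∈ U.filter (fun a => a % 2 = 1), fterm (2 * m) q a
        + ∑ a ∈ U.filter (fun a => ¬ a % 2 = 1), fterm (2 * m) q a := by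
        rw [rc_eq_fterm, hS2, hEvSum]
    _ = ∑ a ∈ U, fterm (2 * m) q a := hsum
    _ = ∑ b ∈ (Finset.Icc 1 m).filter (fun a => Nat.gcd a m = 1),
          (1 + (-1 : ℂ) ^ q) * fterm (2 * m) q b := by
        rw [hsplitU]; exact Finset.sum_congr rfl fun b _ => hpair b
    _ = _ := by rw [← Finset.mul_sum]

lemma rc_base_odd (m q : ℕ) (hm : Odd m) (hm0 : 0 < m) (hq : Odd q) :
    rc (2 * m) q = - rc m q := by
  have := rc_base_core m q hm hm0
  rw [Odd.neg_one_pow hq] at this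
  linear_combination this

lemma rc_base_even (m q : ℕ) (hm : Odd m) (hm0 : 0 < m) :
    rc (2 * m) (2 * q) = rc m q := by
  have h := rc_base_core m (2 * q) hm hm0
  rw [Even.neg_one_pow ⟨q, by ring⟩] at h
  have hT : ∑ b ∈ (Finset.Icc 1 m).filter (fun a => Nat.gcd a m = 1),
      fterm (2 * m) (2 * q) b = rc m q := by
    rw [rc_eq_fterm]
    exact Finset.sum_congr rfl fun b _ => fterm_double_q m q b hm0.ne'
  rw [hT, rc_two_mul m q hm hm0] at h
  linear_combination h

lemma oddpart_two_mul (k : ℕ) (hk : 0 < k) :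
    (2 * k) / 2 ^ (padicValNat 2 (2 * k)) = k / 2 ^ (padicValNat 2 k) := by
  haveI : Fact (Nat.Prime 2) := ⟨Nat.prime_two⟩
  have hv : padicValNat 2 (2 * k) = 1 + padicValNat 2 k := by
    rw [padicValNat.mul (by norm_num) hk.ne']
    simp [padicValNat.self (by norm_num : 1 < 2)]
  rw [hv, pow_add, pow_one, Nat.mul_div_mul_left _ _ (by norm_num : 0 < 2)]

lemma rc_oddPart (m : ℕ) (hm : Odd m) (hm0 : 0 < m) :
    ∀ q : ℕ, 0 < q → rc m q = rc m (q / 2 ^ (padicValNat 2 q)) := by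
  intro q
  induction q using Nat.strong_induction_on with
  | _ q IH =>
    intro hq
    rcases Nat.even_or_odd q with hev | hodd
    · obtain ⟨k, hk⟩ := hev
      have hk2 : q = 2 * k := by omega
      have hk0 : 0 < k := by omega
      rw [hk2, oddpart_two_mul k hk0, rc_two_mul m k hm hm0]
      exact IH k (by omega) hk0
    · have hv : padicValNat 2 q = 0 :=
        padicValNat.eq_zero_of_not_dvd (by rw [Nat.odd_iff] at hodd; omega)
      rw [hv, pow_zero, Nat.div_one]

theorem stmt3 (t m q : ℕ) (ht : 1 ≤ t) (hm : Odd m) (hm0 : 0 < m) (hq : 0 < q) :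
    (2 ^ (t - 1) ∣ q →
      rc (2 ^ t * m) q
        = (-1 : ℂ) ^ (q / 2 ^ (t - 1)) * 2 ^ (t - 1) * rc m (q / 2 ^ (padicValNat 2 q))) ∧
    (¬ 2 ^ (t - 1) ∣ q → rc (2 ^ t * m) q = 0) := by
  induction t, ht using Nat.le_induction generalizing q with
  | base =>
    constructor
    · intro _
      simp only [pow_one, Nat.sub_self, pow_zero, Nat.div_one]
      rcases Nat.even_or_odd q with hev | hodd
      · obtain ⟨k, hk⟩ := hev
        have hk2 : q = 2 * k := by omega
        have hk0 : 0 < k := by omega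
        rw [hk2, rc_base_even m k hm hm0, oddpart_two_mul k hk0,
          ← rc_oddPart m hm hm0 k hk0, Even.neg_one_pow ⟨k, by ring⟩]
        ring
      · have hv : padicValNat 2 q = 0 :=
          padicValNat.eq_zero_of_not_dvd (by rw [Nat.odd_iff] at hodd; omega)
        rw [rc_base_odd m q hm hm0 hodd, hv, pow_zero, Nat.div_one, Odd.neg_one_pow hodd]
        ring
    · intro h
      exact absurd (one_dvd q) (by simpa using h)
  | succ t ht IH =>
    obtain ⟨s, rfl⟩ : ∃ s, t = s + 1 := ⟨t - 1, by omega⟩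
    have hpos : 0 < 2 ^ (s + 1) * m := by positivity
    have h2dvd : 2 ∣ 2 ^ (s + 1) * m := Dvd.dvd.mul_right (dvd_pow_self 2 (by omega)) m
    have hsplit : 2 ^ (s + 1 + 1) * m = 2 * (2 ^ (s + 1) * m) := by ring
    simp only [Nat.add_sub_cancel] at IH ⊢
    rcases Nat.even_or_odd q with hev | hodd
    · obtain ⟨k, hk⟩ := hev
      have hk2 : q = 2 * k := by omega
      have hk0 : 0 < k := by omega
      have hrc : rc (2 ^ (s + 1 + 1) * m) q = 2 * rc (2 ^ (s + 1) * m) k := by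
        rw [hsplit, hk2]
        exact rc_double_even _ k hpos h2dvd
      have hIH := IH k hk0
      constructor
      · intro hdvd
        have hdvd' : 2 ^ s ∣ k := by
          rw [hk2, pow_succ'] at hdvd
          exact (Nat.mul_dvd_mul_iff_left (by norm_num : 0 < 2)).mp hdvd
        have e1 : q / 2 ^ (s + 1) = k / 2 ^ s := by
          rw [hk2, pow_succ', Nat.mul_div_mul_left _ _ (by norm_num : 0 < 2)]
        have e2 : q / 2 ^ (padicValNat 2 q) = k / 2 ^ (padicValNat 2 k) := by
          rw [hk2]; exact oddpart_two_mul k hk0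
        rw [hrc, hIH.1 hdvd', e1, e2, pow_succ]
        ring
      · intro hndvd
        have hndvd' : ¬ 2 ^ s ∣ k := by
          intro hc
          exact hndvd (by rw [hk2, pow_succ']; exact Nat.mul_dvd_mul_left 2 hc)
        rw [hrc, hIH.2 hndvd', mul_zero]
    · have hzero : rc (2 ^ (s + 1 + 1) * m) q = 0 := by
        rw [hsplit]
        exact rc_double_zero _ q hpos h2dvd hodd
      constructor
      · intro hdvd
        exfalso
        rw [Nat.odd_iff] at hodd
        have : 2 ∣ q := dvd_trans (dvd_pow_self 2 (by omega)) hdvd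
        omega
      · intro _
        exact hzero
end

section
/- Let Γ = IMCG_n(B,D,σ) be an integral mixed circulant graph. The integers Δ(j), as j ranges over the positive multiples of 4, all have the same parity if and only if B*_2 = 2B*_3. -/
open scoped BigOperators
open Finset

open ArithmeticFunction (moebius zeta mul_apply one_apply natCoe_apply zeta_apply
  moebius_apply_one moebius_apply_prime moebius_apply_prime_pow
  isMultiplicative_moebius moebius_mul_coe_zeta)

noncomputable def Rcz (m q : ℕ) : ℤ :=
  ∑ d ∈ m.divisors.filter (· ∣ q), moebius (m / d) * d

lemma sum_moebius_divisors (n : ℕ) :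
    ∑ d ∈ n.divisors, moebius d = if n = 1 then 1 else 0 := by
  rcases Nat.eq_zero_or_pos n with h | h
  · subst h; simp
  · have h1 : ((moebius * ↑(zeta : ArithmeticFunction ℕ) : ArithmeticFunction ℤ)) n
        = (1 : ArithmeticFunction ℤ) n := by rw [moebius_mul_coe_zeta]
    rw [one_apply, mul_apply] at h1
    rw [← h1, Nat.sum_divisorsAntidiagonal
      (f := fun a b => moebius a * (↑(zeta : ArithmeticFunction ℕ) : ArithmeticFunction ℤ) b)]
    apply Finset.sum_congr rfl
    intro d hd
    have hnd : n / d ≠ 0 :=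
      Nat.div_ne_zero_iff.mpr ⟨(Nat.pos_of_mem_divisors hd).ne',
        Nat.le_of_dvd h (Nat.dvd_of_mem_divisors hd)⟩
    simp [natCoe_apply, zeta_apply, hnd]

lemma exp_sum (M q : ℕ) (hM : 0 < M) :
    ∑ a ∈ Finset.Icc 1 M, Complex.exp (((2 * Real.pi * a * q / M : ℝ) : ℂ) * Complex.I)
      = if M ∣ q then (M : ℂ) else 0 := by
  have hM0 : (M : ℝ) ≠ 0 := Nat.cast_ne_zero.mpr hM.ne'
  have hMc : (M : ℂ) ≠ 0 := Nat.cast_ne_zero.mpr hM.ne'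
  set z : ℂ := Complex.exp (((2 * Real.pi * q / M : ℝ) : ℂ) * Complex.I) with hz
  have hterm : ∀ a : ℕ, Complex.exp (((2 * Real.pi * a * q / M : ℝ) : ℂ) * Complex.I) = z ^ a := by
    intro a
    rw [hz, ← Complex.exp_nat_mul]
    congr 1
    push_cast
    ring
  have hzM : z ^ M = 1 := by
    rw [hz, ← Complex.exp_nat_mul]
    have : (M : ℂ) * (((2 * Real.pi * q / M : ℝ) : ℂ) * Complex.I)
        = (q : ℤ) * (2 * (Real.pi : ℂ) * Complex.I) := by
      push_cast
      field_simp
    rw [this, Complex.exp_int_mul_two_pi_mul_I]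
  have hz1 : z = 1 ↔ M ∣ q := by
    rw [hz, Complex.exp_eq_one_iff]
    constructor
    · rintro ⟨k, hk⟩
      have hI : (Complex.I : ℂ) ≠ 0 := Complex.I_ne_zero
      have h2 : ((2 * Real.pi * q / M : ℝ) : ℂ) = (k : ℂ) * (2 * (Real.pi : ℂ)) :=
        mul_right_cancel₀ hI (hk.trans (by ring))
      have h3 : (2 * Real.pi * q / M : ℝ) = (k : ℝ) * (2 * Real.pi) := by
        exact_mod_cast h2
      have hpi2 : (2 * Real.pi : ℝ) ≠ 0 := by positivity
      have h3' : 2 * Real.pi * (q : ℝ) = (k : ℝ) * (2 * Real.pi) * M := by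
        field_simp at h3
        rw [h3]; ring
      have h4 : (q : ℝ) = (k : ℝ) * M := by
        apply mul_left_cancel₀ hpi2
        rw [show (2 * Real.pi) * ((k : ℝ) * M) = (k : ℝ) * (2 * Real.pi) * M by ring, ← h3']
      have h5 : (q : ℤ) = k * M := by exact_mod_cast h4
      have : (M : ℤ) ∣ (q : ℤ) := ⟨k, by rw [h5]; ring⟩
      exact_mod_cast this
    · rintro ⟨c, rfl⟩
      refine ⟨c, ?_⟩
      push_cast
      field_simp
  by_cases hd : M ∣ q
  · rw [if_pos hd]
    have h1 : z = 1 := hz1.mpr hd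
    simp only [hterm, h1, one_pow]
    simp [Nat.card_Icc]
  · rw [if_neg hd]
    have hzne : z ≠ 1 := fun h => hd (hz1.mp h)
    calc ∑ a ∈ Finset.Icc 1 M, Complex.exp (((2 * Real.pi * a * q / M : ℝ) : ℂ) * Complex.I)
        = ∑ a ∈ Finset.Icc 1 M, z ^ a := by simp only [hterm]
      _ = ∑ a ∈ Finset.range M, z ^ (1 + a) := by
          have hIcc : Finset.Icc 1 M = (Finset.range M).map ⟨(1 + ·), fun a b h => by simpa using h⟩ := by
            ext x
            simp only [Finset.mem_Icc, Finset.mem_map, Finset.mem_range, Function.Embedding.coeFn_mk]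
            constructor
            · rintro ⟨h1, h2⟩; exact ⟨x - 1, by omega, by show 1 + (x - 1) = x; omega⟩
            · rintro ⟨a, ha, rfl⟩; show 1 ≤ 1 + a ∧ 1 + a ≤ M; omega
          rw [hIcc, Finset.sum_map]; rfl
      _ = z * ((z ^ M - 1) / (z - 1)) := by
          rw [← geom_sum_eq hzne M, Finset.mul_sum]
          apply Finset.sum_congr rfl
          intro a _
          rw [pow_add, pow_one]
      _ = 0 := by rw [hzM]; simp

lemma rc_eq (m q : ℕ) : rc m q = ((Rcz m q : ℤ) : ℂ) := by
  rcases Nat.eq_zero_or_pos m with rfl | hm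
  · simp [rc, Rcz]
  have hm0 : m ≠ 0 := hm.ne'
  set E : ℕ → ℂ := fun a => Complex.exp (((2 * Real.pi * a * q / m : ℝ) : ℂ) * Complex.I) with hE
  have step1 : rc m q = ∑ a ∈ Finset.Icc 1 m, ∑ d ∈ m.divisors.filter (· ∣ a),
      (moebius d : ℂ) * E a := by
    unfold rc
    rw [Finset.sum_filter]
    apply Finset.sum_congr rfl
    intro a ha
    have ha1 : 1 ≤ a := (Finset.mem_Icc.mp ha).1
    have hset : m.divisors.filter (· ∣ a) = (Nat.gcd a m).divisors := by
      ext d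
      simp only [Nat.mem_divisors, Finset.mem_filter]
      constructor
      · rintro ⟨⟨h1, _⟩, h3⟩
        exact ⟨Nat.dvd_gcd h3 h1, Nat.gcd_ne_zero_right hm0⟩
      · rintro ⟨h1, _⟩
        exact ⟨⟨h1.trans (Nat.gcd_dvd_right a m), hm0⟩, h1.trans (Nat.gcd_dvd_left a m)⟩
    rw [hset, ← Finset.sum_mul]
    have h2 : (∑ d ∈ (Nat.gcd a m).divisors, ((moebius d : ℤ) : ℂ))
        = if Nat.gcd a m = 1 then 1 else 0 := by
      rw [← Int.cast_sum, sum_moebius_divisors]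
      split_ifs <;> simp
    rw [h2]
    split_ifs <;> simp [hE]
  have step2 : ∑ a ∈ Finset.Icc 1 m, ∑ d ∈ m.divisors.filter (· ∣ a), (moebius d : ℂ) * E a
      = ∑ d ∈ m.divisors, (moebius d : ℂ) * ∑ a ∈ (Finset.Icc 1 m).filter (d ∣ ·), E a := by
    simp_rw [Finset.sum_filter]
    rw [Finset.sum_comm]
    apply Finset.sum_congr rfl
    intro d _
    rw [Finset.mul_sum]
    apply Finset.sum_congr rfl
    intro a _
    split_ifs <;> simp
  have step3 : ∀ d ∈ m.divisors, (∑ a ∈ (Finset.Icc 1 m).filter (d ∣ ·), E a)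
      = if (m / d) ∣ q then ((m / d : ℕ) : ℂ) else 0 := by
    intro d hd
    have hdvd : d ∣ m := Nat.dvd_of_mem_divisors hd
    have hd0 : 0 < d := Nat.pos_of_mem_divisors hd
    have hmd0 : 0 < m / d := Nat.div_pos (Nat.le_of_dvd hm hdvd) hd0
    have hmeq : d * (m / d) = m := Nat.mul_div_cancel' hdvd
    have himg : (Finset.Icc 1 m).filter (d ∣ ·) = (Finset.Icc 1 (m / d)).image (fun b => d * b) := by
      ext x
      simp only [Finset.mem_filter, Finset.mem_Icc, Finset.mem_image]
      constructor
      · rintro ⟨⟨h1, h2⟩, c, rfl⟩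
        refine ⟨c, ⟨?_, ?_⟩, rfl⟩
        · rcases Nat.eq_zero_or_pos c with rfl | hc
          · simp at h1
          · exact hc
        · rw [Nat.le_div_iff_mul_le hd0, Nat.mul_comm]; exact h2
      · rintro ⟨b, ⟨h1, h2⟩, rfl⟩
        have : d * b ≤ m := by
          calc d * b ≤ d * (m / d) := Nat.mul_le_mul_left d h2
            _ = m := hmeq
        exact ⟨⟨Nat.one_le_iff_ne_zero.mpr (Nat.mul_ne_zero hd0.ne' (by omega)), this⟩, ⟨b, rfl⟩⟩
    rw [himg, Finset.sum_image (fun x _ y _ h => Nat.eq_of_mul_eq_mul_left hd0 h)]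
    have hreal : (m : ℝ) = (d : ℝ) * ((m / d : ℕ) : ℝ) := by exact_mod_cast hmeq.symm
    have hterm : ∀ b : ℕ, E (d * b)
        = Complex.exp (((2 * Real.pi * b * q / ((m / d : ℕ) : ℝ) : ℝ) : ℂ) * Complex.I) := by
      intro b
      have hd0' : (d : ℝ) ≠ 0 := Nat.cast_ne_zero.mpr hd0.ne'
      have hmd0' : ((m / d : ℕ) : ℝ) ≠ 0 := Nat.cast_ne_zero.mpr hmd0.ne'
      have harg : (2 * Real.pi * ((d * b : ℕ) : ℝ) * q / m : ℝ)
          = (2 * Real.pi * b * q / ((m / d : ℕ) : ℝ) : ℝ) := by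
        rw [hreal]
        push_cast
        field_simp
      simp only [hE, harg]
    rw [Finset.sum_congr rfl (fun b _ => hterm b)]
    exact exp_sum (m / d) q hmd0
  have step3' : (∑ d ∈ m.divisors, (moebius d : ℂ) * ∑ a ∈ (Finset.Icc 1 m).filter (d ∣ ·), E a)
      = ∑ d ∈ m.divisors, (moebius d : ℂ) * (if (m / d) ∣ q then ((m / d : ℕ) : ℂ) else 0) :=
    Finset.sum_congr rfl (fun d hd => by rw [step3 d hd])
  rw [step1, step2, step3']
  have step4 : ∑ d ∈ m.divisors, (moebius d : ℂ) * (if (m / d) ∣ q then ((m / d : ℕ) : ℂ) else 0)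
      = ∑ d ∈ m.divisors, (moebius (m / d) : ℂ) * (if d ∣ q then (d : ℂ) else 0) := by
    rw [← Nat.sum_div_divisors m (fun e => (moebius (m / e) : ℂ) * (if e ∣ q then (e : ℂ) else 0))]
    apply Finset.sum_congr rfl
    intro d hd
    rw [Nat.div_div_self (Nat.dvd_of_mem_divisors hd) hm0]
  rw [step4]
  unfold Rcz
  rw [Finset.sum_filter, Int.cast_sum]
  apply Finset.sum_congr rfl
  intro d _
  split_ifs with h
  · push_cast; ring
  · simp

noncomputable def fq (q : ℕ) : ArithmeticFunction ℤ :=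
  ⟨fun d => if d ≠ 0 ∧ d ∣ q then (d : ℤ) else 0, by simp⟩

lemma fq_mult (q : ℕ) : (fq q).IsMultiplicative := by
  constructor
  · simp [fq]
  · intro a b hab
    show (if a * b ≠ 0 ∧ a * b ∣ q then ((a * b : ℕ) : ℤ) else 0)
        = (if a ≠ 0 ∧ a ∣ q then (a : ℤ) else 0) * (if b ≠ 0 ∧ b ∣ q then (b : ℤ) else 0)
    by_cases h : a * b ≠ 0 ∧ a * b ∣ q
    · rw [if_pos h, if_pos, if_pos]
      · push_cast; ring
      · exact ⟨fun hb => h.1 (by simp [hb]), (dvd_mul_left b a).trans h.2⟩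
      · exact ⟨fun ha => h.1 (by simp [ha]), (dvd_mul_right a b).trans h.2⟩
    · rw [if_neg h]
      push_neg at h
      by_cases ha : a ≠ 0 ∧ a ∣ q
      · by_cases hb : b ≠ 0 ∧ b ∣ q
        · exact absurd (Nat.Coprime.mul_dvd_of_dvd_of_dvd hab ha.2 hb.2)
            (h (Nat.mul_ne_zero ha.1 hb.1))
        · rw [if_neg hb, mul_zero]
      · rw [if_neg ha, zero_mul]

lemma Rcz_eq_conv (m q : ℕ) (hm0 : m ≠ 0) : Rcz m q = (fq q * moebius) m := by
  rw [mul_apply, Nat.sum_divisorsAntidiagonal (f := fun a b => fq q a * moebius b)]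
  unfold Rcz
  rw [Finset.sum_filter]
  apply Finset.sum_congr rfl
  intro d hd
  have hd0 : d ≠ 0 := (Nat.pos_of_mem_divisors hd).ne'
  show (if d ∣ q then moebius (m / d) * (d : ℤ) else 0)
      = (if d ≠ 0 ∧ d ∣ q then (d : ℤ) else 0) * moebius (m / d)
  by_cases h : d ∣ q
  · rw [if_pos h, if_pos ⟨hd0, h⟩]; ring
  · rw [if_neg h, if_neg (fun hh => h hh.2), zero_mul]

lemma Rcz_factorization (m q : ℕ) (hm0 : m ≠ 0) :
    Rcz m q = ∏ p ∈ m.primeFactors, Rcz (p ^ m.factorization p) q := by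
  have hmul : (fq q * moebius).IsMultiplicative :=
    (fq_mult q).mul isMultiplicative_moebius
  rw [Rcz_eq_conv m q hm0, hmul.multiplicative_factorization _ hm0,
    Nat.prod_factorization_eq_prod_primeFactors]
  apply Finset.prod_congr rfl
  intro p hp
  have hppow : p ^ m.factorization p ≠ 0 :=
    pow_ne_zero _ (Nat.prime_of_mem_primeFactors hp).pos.ne'
  rw [← Rcz_eq_conv _ q hppow]

lemma Rcz_one (q : ℕ) : Rcz 1 q = 1 := by
  simp [Rcz, Nat.divisors_one, Finset.filter_singleton]

lemma Rcz_prime_pow (p e q : ℕ) (hp : p.Prime) (he : 1 ≤ e) :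
    Rcz (p ^ e) q = (if p ^ e ∣ q then ((p : ℤ)) ^ e else 0)
      - (if p ^ (e - 1) ∣ q then ((p : ℤ)) ^ (e - 1) else 0) := by
  unfold Rcz
  rw [Finset.sum_filter, Nat.sum_divisors_prime_pow hp]
  simp only [Nat.cast_pow]
  have hzero : ∀ i ∈ Finset.range (e + 1), i ∉ ({e - 1, e} : Finset ℕ) →
      (if p ^ i ∣ q then moebius (p ^ e / p ^ i) * ((p : ℤ) ^ i) else 0) = 0 := by
    intro i hi hni
    simp only [Finset.mem_insert, Finset.mem_singleton] at hni
    push_neg at hni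
    simp only [Finset.mem_range] at hi
    have hie : i ≤ e := by omega
    have h1 : e - i ≠ 0 := by omega
    have h2 : e - i ≠ 1 := by omega
    rw [Nat.pow_div hie hp.pos, moebius_apply_prime_pow hp h1, if_neg h2]
    split_ifs <;> simp
  have hsub : ({e - 1, e} : Finset ℕ) ⊆ Finset.range (e + 1) := by
    intro i hi
    simp only [Finset.mem_insert, Finset.mem_singleton] at hi
    simp only [Finset.mem_range]
    omega
  rw [← Finset.sum_subset hsub hzero]
  rw [Finset.sum_insert (by simp; omega), Finset.sum_singleton]
  rw [Nat.pow_div (le_refl e) hp.pos, Nat.sub_self, pow_zero, moebius_apply_one]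
  rw [Nat.pow_div (by omega : e - 1 ≤ e) hp.pos, show e - (e - 1) = 1 by omega, pow_one,
    moebius_apply_prime hp]
  split_ifs <;> ring

lemma odd_prod_iff (s : Finset ℕ) (f : ℕ → ℤ) :
    Odd (∏ p ∈ s, f p) ↔ ∀ p ∈ s, Odd (f p) := by
  rw [← Int.not_even_iff_odd, even_iff_two_dvd, Int.prime_two.dvd_finset_prod_iff f]
  push_neg
  constructor <;> intro h p hp <;>
    simpa [Int.odd_iff, even_iff_two_dvd] using h p hp

lemma odd_Rcz_prime_pow (p e q : ℕ) (hp : p.Prime) (hpodd : p ≠ 2) (he : 1 ≤ e) (hq : q ≠ 0) :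
    Odd (Rcz (p ^ e) q) ↔ q.factorization p = e - 1 := by
  rw [Rcz_prime_pow p e q hp he]
  have hpo : Odd (p : ℤ) := by
    exact_mod_cast hp.odd_of_ne_two hpodd
  have h1 : p ^ e ∣ q ↔ e ≤ q.factorization p := hp.pow_dvd_iff_le_factorization hq
  have h2 : p ^ (e - 1) ∣ q ↔ e - 1 ≤ q.factorization p := hp.pow_dvd_iff_le_factorization hq
  by_cases hc1 : p ^ e ∣ q
  · have hc2 : p ^ (e - 1) ∣ q := dvd_trans (pow_dvd_pow p (by omega)) hc1
    rw [if_pos hc1, if_pos hc2]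
    constructor
    · intro hodd
      exact absurd hodd (Int.not_odd_iff_even.mpr ((hpo.pow).sub_odd (hpo.pow)))
    · intro hv
      exfalso
      rw [h1] at hc1
      omega
  · rw [if_neg hc1]
    by_cases hc2 : p ^ (e - 1) ∣ q
    · rw [if_pos hc2]
      rw [zero_sub, odd_neg]
      constructor
      · intro _
        rw [h1] at hc1; rw [h2] at hc2
        omega
      · intro _
        exact hpo.pow
    · rw [if_neg hc2]
      simp only [sub_zero]
      constructor
      · intro h
        exact absurd h (Int.not_odd_iff_even.mpr ⟨0, by norm_num⟩)
      · intro hv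
        rw [h2] at hc2
        omega

lemma odd_Rcz_iff (m q : ℕ) (hm : Odd m) (hm1 : m ≠ 0) (hq : q ≠ 0) :
    Odd (Rcz m q) ↔ ∀ p ∈ m.primeFactors, q.factorization p = m.factorization p - 1 := by
  rw [Rcz_factorization m q hm1, odd_prod_iff]
  apply forall_congr'
  intro p
  apply imp_congr_right
  intro hp
  have hpp : p.Prime := Nat.prime_of_mem_primeFactors hp
  have hp2 : p ≠ 2 := by
    intro h
    subst h
    exact (Nat.not_even_iff_odd.mpr hm) ((even_iff_two_dvd).mpr (Nat.dvd_of_mem_primeFactors hp))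
  have he : 1 ≤ m.factorization p := (Nat.Prime.factorization_pos_of_dvd hpp hm1
    (Nat.dvd_of_mem_primeFactors hp))
  exact odd_Rcz_prime_pow p (m.factorization p) q hpp hp2 he hq

lemma sum_even (S : Finset ℕ) (f : ℕ → ℤ) (h : ∀ m ∈ S, Even (f m)) :
    Even (∑ m ∈ S, f m) := by
  rw [even_iff_two_dvd]
  exact Finset.dvd_sum (fun m hm => even_iff_two_dvd.mp (h m hm))

lemma exists_parity_breaker (S : Finset ℕ) (hS : S.Nonempty)
    (hodd : ∀ m ∈ S, Odd m) (hgt : ∀ m ∈ S, 1 < m) :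
    ∃ q q' : ℕ, 0 < q ∧ Odd q ∧ 0 < q' ∧ Odd q' ∧
      Odd ((∑ m ∈ S, Rcz m q) - (∑ m ∈ S, Rcz m q')) := by
  set N : ℕ := ∏ m ∈ S, m with hN
  have hN0 : N ≠ 0 := Finset.prod_ne_zero_iff.mpr (fun m hm => by have := hgt m hm; omega)
  have hNodd : Odd N := Finset.prod_induction _ Odd (fun a b => Odd.mul) odd_one hodd
  have hdvdN : ∀ m ∈ S, m ∣ N := fun m hm => Finset.dvd_prod_of_mem _ hm
  set m₀ : ℕ := S.min' hS with hm₀def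
  have hm₀S : m₀ ∈ S := S.min'_mem hS
  have hm₀1 : 1 < m₀ := hgt m₀ hm₀S
  have hm₀0 : m₀ ≠ 0 := by omega
  set e : ℕ → ℕ := fun p =>
    if p ∈ m₀.primeFactors then m₀.factorization p - 1 else 2 * N.factorization p with he
  set q : ℕ := ∏ p ∈ N.primeFactors, p ^ e p with hq
  have hq0 : q ≠ 0 := Finset.prod_ne_zero_iff.mpr
    (fun p hp => pow_ne_zero _ (Nat.prime_of_mem_primeFactors hp).pos.ne')
  have hqfact : ∀ r ∈ N.primeFactors, q.factorization r = e r := by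
    intro r hr
    have h1 : q.factorization = ∑ p ∈ N.primeFactors, (p ^ e p).factorization := by
      rw [hq]
      exact Nat.factorization_prod
        (fun p hp => pow_ne_zero _ (Nat.prime_of_mem_primeFactors hp).pos.ne')
    have h2 : ∀ p ∈ N.primeFactors, (p ^ e p).factorization r = if p = r then e p else 0 := by
      intro p hp
      rw [(Nat.prime_of_mem_primeFactors hp).factorization_pow, Finsupp.single_apply]
    rw [h1, Finsupp.finset_sum_apply, Finset.sum_congr rfl h2,
      Finset.sum_ite_eq' N.primeFactors r e, if_pos hr]
  have hqodd : Odd q := by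
    rw [← Nat.not_even_iff_odd, even_iff_two_dvd]
    intro h2
    obtain ⟨p, hp, hdvd⟩ := ((Nat.Prime.prime Nat.prime_two).dvd_finset_prod_iff _).mp h2
    have hpp := Nat.prime_of_mem_primeFactors hp
    have : (2 : ℕ) ∣ p := Nat.Prime.dvd_of_dvd_pow Nat.prime_two hdvd
    have hp2 : p = 2 := ((Nat.prime_dvd_prime_iff_eq Nat.prime_two hpp).mp this).symm
    subst hp2
    exact (Nat.not_even_iff_odd.mpr hNodd) (even_iff_two_dvd.mpr (Nat.dvd_of_mem_primeFactors hp))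
  -- the m₀ term is odd
  have hm₀odd : Odd (Rcz m₀ q) := by
    rw [odd_Rcz_iff m₀ q (hodd m₀ hm₀S) hm₀0 hq0]
    intro p hp
    have hpN : p ∈ N.primeFactors := Nat.primeFactors_mono (hdvdN m₀ hm₀S) hN0 hp
    rw [hqfact p hpN, he]
    simp only [if_pos hp]
  -- other terms are even
  have hother : ∀ m ∈ S, m ≠ m₀ → Even (Rcz m q) := by
    intro m hm hne
    have hm1 : 1 < m := hgt m hm
    have hm0' : m ≠ 0 := by omega
    rw [← Int.not_odd_iff_even, odd_Rcz_iff m q (hodd m hm) hm0' hq0]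
    intro hall
    have hsub : ∀ p ∈ m.primeFactors, p ∈ m₀.primeFactors ∧
        m.factorization p = m₀.factorization p := by
      intro p hp
      have hpN : p ∈ N.primeFactors := Nat.primeFactors_mono (hdvdN m hm) hN0 hp
      have hqf := hall p hp
      rw [hqfact p hpN] at hqf
      simp only [he] at hqf
      have hmfp : 1 ≤ m.factorization p :=
        (Nat.prime_of_mem_primeFactors hp).factorization_pos_of_dvd hm0'
          (Nat.dvd_of_mem_primeFactors hp)
      have hmN : m.factorization p ≤ N.factorization p := by
        have := (Nat.factorization_le_iff_dvd hm0' hN0).mpr (hdvdN m hm)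
        exact this p
      have hNfp : 1 ≤ N.factorization p := le_trans hmfp hmN
      by_cases hpm₀ : p ∈ m₀.primeFactors
      · rw [if_pos hpm₀] at hqf
        have hm₀fp : 1 ≤ m₀.factorization p :=
          (Nat.prime_of_mem_primeFactors hpm₀).factorization_pos_of_dvd hm₀0
            (Nat.dvd_of_mem_primeFactors hpm₀)
        exact ⟨hpm₀, by omega⟩
      · rw [if_neg hpm₀] at hqf
        omega
    have hdvd' : m ∣ m₀ := by
      rw [← Nat.factorization_le_iff_dvd hm0' hm₀0]
      intro p
      by_cases hp : p ∈ m.primeFactors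
      · rw [(hsub p hp).2]
      · have h0 : m.factorization p = 0 := by
          rw [← Nat.support_factorization] at hp
          exact Finsupp.notMem_support_iff.mp hp
        rw [h0]
        exact Nat.zero_le _
    have h1 : m₀ ≤ m := S.min'_le m hm
    have h2 : m ≤ m₀ := Nat.le_of_dvd (by omega) hdvd'
    omega
  have hsumq : Odd (∑ m ∈ S, Rcz m q) := by
    rw [← Finset.add_sum_erase S _ hm₀S]
    exact hm₀odd.add_even (sum_even _ _ (fun m hm =>
      hother m (Finset.mem_of_mem_erase hm) (Finset.ne_of_mem_erase hm)))
  -- q' = N * N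
  have hq'0 : N * N ≠ 0 := Nat.mul_ne_zero hN0 hN0
  have hsumq' : Even (∑ m ∈ S, Rcz m (N * N)) := by
    apply sum_even
    intro m hm
    have hm1 : 1 < m := hgt m hm
    have hm0' : m ≠ 0 := by omega
    rw [← Int.not_odd_iff_even, odd_Rcz_iff m _ (hodd m hm) hm0' hq'0]
    intro hall
    obtain ⟨p, hpp, hpdvd⟩ := Nat.exists_prime_and_dvd (by omega : m ≠ 1)
    have hp : p ∈ m.primeFactors := Nat.mem_primeFactors.mpr ⟨hpp, hpdvd, hm0'⟩
    have hqf := hall p hp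
    rw [Nat.factorization_mul hN0 hN0] at hqf
    have hmfp : 1 ≤ m.factorization p := hpp.factorization_pos_of_dvd hm0' hpdvd
    have hmN : m.factorization p ≤ N.factorization p :=
      (Nat.factorization_le_iff_dvd hm0' hN0).mpr (hdvdN m hm) p
    simp only [Finsupp.coe_add, Pi.add_apply] at hqf
    omega
  exact ⟨q, N * N, Nat.pos_of_ne_zero hq0, hqodd, Nat.pos_of_ne_zero hq'0,
    hNodd.mul hNodd, hsumq.sub_even hsumq'⟩

noncomputable def Lam3Z (n : ℕ) (B D : Finset ℕ) (σ : ℕ → ℤ) (j : ℕ) : ℤ :=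
  (∑ i ∈ Finset.Icc 4 (padicValNat 2 n), ∑ d ∈ Bpart n B i,
      (if 2 ^ (i - 1) ∣ j then (-1 : ℤ) ^ (j / 2 ^ (i - 1)) else 0)
        * 2 ^ (i - 4) * Rcz (n / (2 ^ i * d)) (j / 2 ^ (padicValNat 2 j)))
  + ∑ i ∈ Finset.Icc 4 (padicValNat 2 n), ∑ d ∈ Bpart n D i,
      (if 2 ^ (i - 2) ∣ j ∧ Odd (j / 2 ^ (i - 2)) then 1 else 0)
        * (σ d) * (-1 : ℤ) ^ ((n / (2 ^ i * d) - 1) / 2)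
        * (-1 : ℤ) ^ ((j / 2 ^ (i - 2) + 1) / 2) * 2 ^ (i - 4)
        * Rcz (n / (2 ^ i * d)) (j / 2 ^ (i - 2))

noncomputable def DeltaZ (n : ℕ) (B D : Finset ℕ) (σ : ℕ → ℤ) (j : ℕ) : ℤ :=
  (∑ d ∈ BpartStar n B 2, Rcz (n / (4 * d)) (j / 2 ^ (padicValNat 2 j)))
  + (∑ d ∈ Bpart n B 3, (-1 : ℤ) ^ (j / 4) * Rcz (n / (8 * d)) (j / 2 ^ (padicValNat 2 j)))
  + 2 * Lam3Z n B D σ j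

lemma Delta_cast (n : ℕ) (B D : Finset ℕ) (σ : ℕ → ℤ) (j : ℕ) :
    Delta n B D σ j = ((DeltaZ n B D σ j : ℤ) : ℂ) := by
  unfold Delta DeltaZ Lam3 Lam3Z
  simp_rw [rc_eq]
  push_cast [apply_ite (fun x : ℤ => (x : ℂ))]
  ring

lemma Bpart_facts {n d i : ℕ} (hn : n ≠ 0) (hd0 : d ≠ 0)
    (hd : d ∣ n) (hi : padicValNat 2 (n / d) = i) :
    2 ^ i * d ∣ n ∧ Odd (n / (2 ^ i * d)) := by
  have hnd0 : n / d ≠ 0 := by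
    have := Nat.le_of_dvd (Nat.pos_of_ne_zero hn) hd
    exact Nat.div_ne_zero_iff.mpr ⟨hd0, this⟩
  have h2i : 2 ^ i ∣ n / d := by
    rw [← hi]; exact pow_padicValNat_dvd
  have hdvd : 2 ^ i * d ∣ n := by
    obtain ⟨t, ht⟩ := h2i
    have hn' : n = d * (n / d) := (Nat.div_mul_cancel hd).symm.trans (by ring)
    exact ⟨t, by rw [hn', ht]; ring⟩
  refine ⟨hdvd, ?_⟩
  have heq : n / (2 ^ i * d) = (n / d) / 2 ^ i := by
    rw [Nat.div_div_eq_div_mul, Nat.mul_comm]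
  rw [heq]
  have hfact : (n / d).factorization 2 = i := by
    rw [Nat.factorization_def _ Nat.prime_two]; exact hi
  have := Nat.not_dvd_ordCompl Nat.prime_two hnd0
  rw [hfact] at this
  rw [← Nat.not_even_iff_odd, even_iff_two_dvd]
  exact this

lemma div_inj {n a b : ℕ} (hn : n ≠ 0) (ha : a ∣ n) (hb : b ∣ n)
    (h : n / a = n / b) : a = b := by
  have ha0 : a ≠ 0 := by rintro rfl; exact hn (Nat.eq_zero_of_zero_dvd ha)
  have hb0 : b ≠ 0 := by rintro rfl; exact hn (Nat.eq_zero_of_zero_dvd hb)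
  have h1 : a = n / (n / a) := (Nat.div_div_self ha hn).symm
  rw [h1, h, Nat.div_div_self hb hn]

noncomputable def FGsum (n : ℕ) (B : Finset ℕ) (q : ℕ) : ℤ :=
  (∑ d ∈ BpartStar n B 2, Rcz (n / (4 * d)) q)
  + (∑ d ∈ Bpart n B 3, Rcz (n / (8 * d)) q)

lemma DeltaZ_decomp (n : ℕ) (B D : Finset ℕ) (σ : ℕ → ℤ) (j : ℕ) :
    ∃ k : ℤ, DeltaZ n B D σ j = FGsum n B (j / 2 ^ (padicValNat 2 j)) + 2 * k := by
  unfold DeltaZ FGsum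
  rcases Nat.even_or_odd (j / 4) with h | h
  · refine ⟨Lam3Z n B D σ j, ?_⟩
    have hs : (∑ d ∈ Bpart n B 3,
          (-1 : ℤ) ^ (j / 4) * Rcz (n / (8 * d)) (j / 2 ^ (padicValNat 2 j)))
        = ∑ d ∈ Bpart n B 3, Rcz (n / (8 * d)) (j / 2 ^ (padicValNat 2 j)) :=
      Finset.sum_congr rfl (fun d _ => by rw [h.neg_one_pow, one_mul])
    rw [hs]
  · refine ⟨Lam3Z n B D σ j - ∑ d ∈ Bpart n B 3, Rcz (n / (8 * d)) (j / 2 ^ (padicValNat 2 j)),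
      ?_⟩
    have hs : (∑ d ∈ Bpart n B 3,
          (-1 : ℤ) ^ (j / 4) * Rcz (n / (8 * d)) (j / 2 ^ (padicValNat 2 j)))
        = ∑ d ∈ Bpart n B 3, -(Rcz (n / (8 * d)) (j / 2 ^ (padicValNat 2 j))) :=
      Finset.sum_congr rfl (fun d _ => by rw [h.neg_one_pow, neg_one_mul])
    rw [hs, Finset.sum_neg_distrib]
    ring

lemma claim2 (n : ℕ) (B : Finset ℕ) (hB : ∀ d ∈ B, d ∣ n ∧ 1 ≤ d ∧ d < n) :
    (∀ q q' : ℕ, 0 < q → Odd q → 0 < q' → Odd q' →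
        Even (FGsum n B q - FGsum n B q')) ↔
      BpartStar n B 2 = scaleSet 2 (BpartStar n B 3) := by
  classical
  rcases Nat.eq_zero_or_pos n with rfl | hn
  · have hBe : B = ∅ := by
      ext d
      simp only [Finset.notMem_empty, iff_false]
      intro hd
      have := (hB d hd).2.2
      omega
    subst hBe
    constructor
    · intro _
      simp [BpartStar, Bpart, scaleSet]
    · intro _ q q' _ _ _ _
      simp [FGsum, BpartStar, Bpart]
  have hn0 : n ≠ 0 := hn.ne'
  have hP2 : ∀ d ∈ BpartStar n B 2, 4 * d ∣ n ∧ Odd (n / (4 * d)) ∧ 1 < n / (4 * d) := by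
    intro d hd
    have hdB : d ∈ B := Finset.mem_of_mem_filter d (Finset.mem_of_mem_erase hd)
    obtain ⟨hdvd, hd1, _⟩ := hB d hdB
    have hpv : padicValNat 2 (n / d) = 2 :=
      (Finset.mem_filter.mp (Finset.mem_of_mem_erase hd)).2
    obtain ⟨h1, h2⟩ := Bpart_facts hn0 (by omega) hdvd hpv
    rw [show (2 : ℕ) ^ 2 = 4 by norm_num] at h1 h2
    refine ⟨h1, h2, ?_⟩
    have hne := Finset.ne_of_mem_erase hd
    have hq0 : n / (4 * d) ≠ 0 := Nat.div_ne_zero_iff.mpr ⟨by omega, Nat.le_of_dvd hn h1⟩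
    rcases Nat.lt_or_ge 1 (n / (4 * d)) with h | h
    · exact h
    · exfalso
      have hone : n / (4 * d) = 1 := Nat.le_antisymm h (Nat.one_le_iff_ne_zero.mpr hq0)
      have hn4 : n = 4 * d := by
        have hc := Nat.div_mul_cancel h1
        rw [hone, one_mul] at hc
        exact hc.symm
      apply hne
      rw [show (2 : ℕ) ^ 2 = 4 by norm_num, hn4, Nat.mul_div_cancel_left d (by norm_num)]
  have hP3 : ∀ d ∈ Bpart n B 3, 8 * d ∣ n ∧ Odd (n / (8 * d)) := by
    intro d hd
    have hdB : d ∈ B := Finset.mem_of_mem_filter d hd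
    obtain ⟨hdvd, hd1, _⟩ := hB d hdB
    have hpv : padicValNat 2 (n / d) = 3 := (Finset.mem_filter.mp hd).2
    obtain ⟨h1, h2⟩ := Bpart_facts hn0 (by omega) hdvd hpv
    rw [show (2 : ℕ) ^ 3 = 8 by norm_num] at h1 h2
    exact ⟨h1, h2⟩
  have hP3' : ∀ d ∈ BpartStar n B 3, 1 < n / (8 * d) := by
    intro d hd
    have hd' : d ∈ Bpart n B 3 := Finset.mem_of_mem_erase hd
    obtain ⟨h1, _⟩ := hP3 d hd'
    have hdB : d ∈ B := Finset.mem_of_mem_filter d hd'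
    obtain ⟨_, hd1, _⟩ := hB d hdB
    have hne := Finset.ne_of_mem_erase hd
    have hq0 : n / (8 * d) ≠ 0 := Nat.div_ne_zero_iff.mpr ⟨by omega, Nat.le_of_dvd hn h1⟩
    rcases Nat.lt_or_ge 1 (n / (8 * d)) with h | h
    · exact h
    · exfalso
      have hone : n / (8 * d) = 1 := Nat.le_antisymm h (Nat.one_le_iff_ne_zero.mpr hq0)
      have hn8 : n = 8 * d := by
        have hc := Nat.div_mul_cancel h1
        rw [hone, one_mul] at hc
        exact hc.symm
      apply hne
      rw [show (2 : ℕ) ^ 3 = 8 by norm_num, hn8, Nat.mul_div_cancel_left d (by norm_num)]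
  set M₂ : Finset ℕ := (BpartStar n B 2).image (fun d => n / (4 * d)) with hM₂
  set M₃ : Finset ℕ := (BpartStar n B 3).image (fun d => n / (8 * d)) with hM₃
  have hinj2 : ∀ a ∈ BpartStar n B 2, ∀ b ∈ BpartStar n B 2,
      n / (4 * a) = n / (4 * b) → a = b := by
    intro a ha b hb h
    have h4 := div_inj hn0 (hP2 a ha).1 (hP2 b hb).1 h
    omega
  have hinj3 : ∀ a ∈ BpartStar n B 3, ∀ b ∈ BpartStar n B 3,
      n / (8 * a) = n / (8 * b) → a = b := by
    intro a ha b hb h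
    have h8 := div_inj hn0 (hP3 a (Finset.mem_of_mem_erase ha)).1
      (hP3 b (Finset.mem_of_mem_erase hb)).1 h
    omega
  have hF2 : ∀ q : ℕ, (∑ m ∈ M₂, Rcz m q) = ∑ d ∈ BpartStar n B 2, Rcz (n / (4 * d)) q :=
    fun q => Finset.sum_image hinj2
  have hF3 : ∀ q : ℕ, (∑ m ∈ M₃, Rcz m q) = ∑ d ∈ BpartStar n B 3, Rcz (n / (8 * d)) q :=
    fun q => Finset.sum_image hinj3
  have hG : ∀ q : ℕ, (∑ d ∈ Bpart n B 3, Rcz (n / (8 * d)) q)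
      = (∑ m ∈ M₃, Rcz m q) + (if n / 2 ^ 3 ∈ Bpart n B 3 then 1 else 0) := by
    intro q
    by_cases hc : n / 2 ^ 3 ∈ Bpart n B 3
    · rw [if_pos hc]
      have hins : Bpart n B 3 = insert (n / 2 ^ 3) (BpartStar n B 3) :=
        (Finset.insert_erase hc).symm
      have hnm : n / 2 ^ 3 ∉ BpartStar n B 3 := Finset.notMem_erase _ _
      rw [hins, Finset.sum_insert hnm, hF3 q]
      have h81 : n / (8 * (n / 2 ^ 3)) = 1 := by
        obtain ⟨h1, _⟩ := hP3 _ hc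
        have h23 : (2 : ℕ) ^ 3 = 8 := by norm_num
        rw [h23] at h1 ⊢
        have h8n : (8 : ℕ) ∣ n := dvd_trans (Dvd.intro (n / 8) rfl) h1
        rw [Nat.mul_div_cancel' h8n, Nat.div_self hn]
      rw [h81, Rcz_one]
      ring
    · rw [if_neg hc, add_zero, hF3 q]
      have : BpartStar n B 3 = Bpart n B 3 := by
        unfold BpartStar
        exact Finset.erase_eq_of_notMem hc
      rw [this]
  set T : Finset ℕ := (M₂ \ M₃) ∪ (M₃ \ M₂) with hT
  have hsplit : ∀ q : ℕ, (∑ m ∈ M₂, Rcz m q) + (∑ m ∈ M₃, Rcz m q)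
      = (∑ m ∈ T, Rcz m q) + (∑ m ∈ M₂ ∩ M₃, Rcz m q) + (∑ m ∈ M₂ ∩ M₃, Rcz m q) := by
    intro q
    rw [← Finset.sum_union_inter (s₁ := M₂) (s₂ := M₃)]
    have hU : M₂ ∪ M₃ = T ∪ (M₂ ∩ M₃) := by
      ext x
      simp only [hT, Finset.mem_union, Finset.mem_inter, Finset.mem_sdiff]
      tauto
    have hdisj : Disjoint T (M₂ ∩ M₃) := by
      rw [Finset.disjoint_left]
      intro x hx hx2
      rw [hT] at hx
      simp only [Finset.mem_union, Finset.mem_sdiff] at hx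
      simp only [Finset.mem_inter] at hx2
      tauto
    rw [hU, Finset.sum_union hdisj]
  have hFG : ∀ q : ℕ, FGsum n B q = (∑ m ∈ T, Rcz m q)
      + (∑ m ∈ M₂ ∩ M₃, Rcz m q) + (∑ m ∈ M₂ ∩ M₃, Rcz m q)
      + (if n / 2 ^ 3 ∈ Bpart n B 3 then 1 else 0) := by
    intro q
    unfold FGsum
    rw [← hF2 q, hG q, ← add_assoc, hsplit q]
  constructor
  · -- parity constant → sets equal
    intro hpar
    by_contra hne
    have hMne : M₂ ≠ M₃ := by
      intro hM
      apply hne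
      ext x
      constructor
      · intro hx
        have hmem : n / (4 * x) ∈ M₃ := by
          rw [← hM, hM₂]
          exact Finset.mem_image_of_mem _ hx
        obtain ⟨e, he, heq⟩ := Finset.mem_image.mp hmem
        have h48 : 8 * e = 4 * x :=
          div_inj hn0 (hP3 e (Finset.mem_of_mem_erase he)).1 (hP2 x hx).1 heq
        exact Finset.mem_image.mpr ⟨e, he, by omega⟩
      · intro hx
        obtain ⟨e, he, rfl⟩ := Finset.mem_image.mp hx
        have hmem : n / (8 * e) ∈ M₂ := by
          rw [hM, hM₃]
          exact Finset.mem_image_of_mem _ he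
        obtain ⟨d, hd, heq⟩ := Finset.mem_image.mp hmem
        have h48 : 4 * d = 8 * e :=
          div_inj hn0 (hP2 d hd).1 (hP3 e (Finset.mem_of_mem_erase he)).1 heq
        have : d = 2 * e := by omega
        rwa [← this]
    have hTne : T.Nonempty := by
      rw [Finset.nonempty_iff_ne_empty]
      intro hTe
      apply hMne
      rw [hT, Finset.union_eq_empty] at hTe
      exact Finset.Subset.antisymm
        (Finset.sdiff_eq_empty_iff_subset.mp hTe.1)
        (Finset.sdiff_eq_empty_iff_subset.mp hTe.2)
    have hTodd : ∀ m ∈ T, Odd m := by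
      intro m hm
      rw [hT] at hm
      simp only [Finset.mem_union, Finset.mem_sdiff] at hm
      rcases hm with ⟨hm, -⟩ | ⟨hm, -⟩
      · obtain ⟨d, hd, rfl⟩ := Finset.mem_image.mp hm
        exact (hP2 d hd).2.1
      · obtain ⟨d, hd, rfl⟩ := Finset.mem_image.mp hm
        exact (hP3 d (Finset.mem_of_mem_erase hd)).2
    have hTgt : ∀ m ∈ T, 1 < m := by
      intro m hm
      rw [hT] at hm
      simp only [Finset.mem_union, Finset.mem_sdiff] at hm
      rcases hm with ⟨hm, -⟩ | ⟨hm, -⟩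
      · obtain ⟨d, hd, rfl⟩ := Finset.mem_image.mp hm
        exact (hP2 d hd).2.2
      · obtain ⟨d, hd, rfl⟩ := Finset.mem_image.mp hm
        exact hP3' d hd
    obtain ⟨q, q', hq0, hqodd, hq'0, hq'odd, hodd⟩ := exists_parity_breaker T hTne hTodd hTgt
    have heven := hpar q q' hq0 hqodd hq'0 hq'odd
    rw [hFG q, hFG q'] at heven
    have : Even ((∑ m ∈ T, Rcz m q) - (∑ m ∈ T, Rcz m q')) := by
      have h2 : ((∑ m ∈ T, Rcz m q) - (∑ m ∈ T, Rcz m q'))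
          = ((∑ m ∈ T, Rcz m q)
          + (∑ m ∈ M₂ ∩ M₃, Rcz m q) + (∑ m ∈ M₂ ∩ M₃, Rcz m q)
          + (if n / 2 ^ 3 ∈ Bpart n B 3 then 1 else 0)
          - ((∑ m ∈ T, Rcz m q')
          + (∑ m ∈ M₂ ∩ M₃, Rcz m q') + (∑ m ∈ M₂ ∩ M₃, Rcz m q')
          + (if n / 2 ^ 3 ∈ Bpart n B 3 then 1 else 0)))
          - ((∑ m ∈ M₂ ∩ M₃, Rcz m q) + (∑ m ∈ M₂ ∩ M₃, Rcz m q))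
          + ((∑ m ∈ M₂ ∩ M₃, Rcz m q') + (∑ m ∈ M₂ ∩ M₃, Rcz m q')) := by ring
      rw [h2]
      exact (Even.add (Even.sub heven ⟨_, rfl⟩) ⟨_, rfl⟩)
    exact (Int.not_odd_iff_even.mpr this) hodd
  · -- sets equal → parity constant
    intro hEq q q' _ _ _ _
    have hM : M₂ = M₃ := by
      rw [hM₂, hEq, scaleSet, Finset.image_image, hM₃]
      apply Finset.image_congr
      intro e _
      show n / (4 * (2 * e)) = n / (8 * e)
      rw [show 4 * (2 * e) = 8 * e by ring]
    have hTe : T = ∅ := by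
      rw [hT, hM]
      simp
    refine ⟨(∑ m ∈ M₂ ∩ M₃, Rcz m q) - (∑ m ∈ M₂ ∩ M₃, Rcz m q'), ?_⟩
    rw [hFG q, hFG q', hTe]
    simp only [Finset.sum_empty]
    ring

lemma odd_part_facts (j : ℕ) (hj : j ≠ 0) :
    Odd (j / 2 ^ (padicValNat 2 j)) ∧ 0 < j / 2 ^ (padicValNat 2 j) := by
  have hf : j.factorization 2 = padicValNat 2 j := Nat.factorization_def j Nat.prime_two
  have hnd := Nat.not_dvd_ordCompl Nat.prime_two hj
  rw [hf] at hnd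
  constructor
  · rw [← Nat.not_even_iff_odd, even_iff_two_dvd]
    exact hnd
  · have := Nat.ordCompl_pos 2 hj
    rwa [hf] at this

lemma val_four_mul (q : ℕ) (hq : Odd q) :
    (4 * q) / 2 ^ (padicValNat 2 (4 * q)) = q := by
  haveI : Fact (Nat.Prime 2) := ⟨Nat.prime_two⟩
  have hq0 : q ≠ 0 := by rintro rfl; simp at hq
  have h1 : padicValNat 2 (4 * q) = padicValNat 2 4 + padicValNat 2 q :=
    padicValNat.mul (by norm_num) hq0
  have h4 : padicValNat 2 4 = 2 := by
    rw [show (4 : ℕ) = 2 ^ 2 by norm_num]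
    exact padicValNat.prime_pow 2
  have hq2 : padicValNat 2 q = 0 := padicValNat.eq_zero_of_not_dvd
    (by rw [← even_iff_two_dvd]; exact Nat.not_even_iff_odd.mpr hq)
  rw [h1, h4, hq2, add_zero, show (2 : ℕ) ^ 2 = 4 by norm_num]
  exact Nat.mul_div_cancel_left q (by norm_num)

theorem stmt13 (n : ℕ) (B D : Finset ℕ) (σ : ℕ → ℤ) (hΓ : IsIMCG n B D σ) :
    (∀ j j' : ℕ, 0 < j → 4 ∣ j → 0 < j' → 4 ∣ j' →
        ∃ k : ℤ, Delta n B D σ j - Delta n B D σ j' = ((2 * k : ℤ) : ℂ)) ↔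
      BpartStar n B 2 = scaleSet 2 (BpartStar n B 3) := by
  obtain ⟨hB, -, -, -, -⟩ := hΓ
  rw [← claim2 n B hB]
  constructor
  · intro h q q' hq0 hqodd hq'0 hq'odd
    obtain ⟨k, hk⟩ := h (4 * q) (4 * q') (by omega) ⟨q, rfl⟩ (by omega) ⟨q', rfl⟩
    rw [Delta_cast, Delta_cast, ← Int.cast_sub] at hk
    have hkz : DeltaZ n B D σ (4 * q) - DeltaZ n B D σ (4 * q') = 2 * k :=
      Int.cast_injective hk
    obtain ⟨k₁, h₁⟩ := DeltaZ_decomp n B D σ (4 * q)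
    obtain ⟨k₂, h₂⟩ := DeltaZ_decomp n B D σ (4 * q')
    rw [h₁, h₂, val_four_mul q hqodd, val_four_mul q' hq'odd] at hkz
    exact ⟨k - k₁ + k₂, by linarith⟩
  · intro h j j' hj0 _ hj'0 _
    obtain ⟨hqodd, hq0⟩ := odd_part_facts j (by omega)
    obtain ⟨hq'odd, hq'0⟩ := odd_part_facts j' (by omega)
    obtain ⟨r, hr⟩ := h _ _ hq0 hqodd hq'0 hq'odd
    obtain ⟨k₁, h₁⟩ := DeltaZ_decomp n B D σ j
    obtain ⟨k₂, h₂⟩ := DeltaZ_decomp n B D σ j'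
    refine ⟨r + k₁ - k₂, ?_⟩
    rw [Delta_cast, Delta_cast, ← Int.cast_sub]
    congr 1
    rw [h₁, h₂]
    linarith
end
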